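/- Let w_1, …, w_M be real numbers with a^{−1} ≤ w_i ≤ a for all i (0 < a < ∞), let 1 ≤ M_T < M, let T be the M_T-th largest value among w_1, …, w_M, and set w̄_i = min(w_i, T). Then for any f_1, …, f_M with |f_i| ≤ F, the self-normalized clipped and unclipped weighted averages satisfy the deterministic bound | Σ_i f_i w̄_i / Σ_j w̄_j − Σ_i f_i w_i / Σ_j w_j | ≤ 2 a² F M_T / M; consequently, if M_T ≤ √M, this difference is at most 2 a² F / √M. -/

import Mathlib

open Finset

/-- deterministic bound on the distortion introduced by the
clipping transformation in a self-normalized importance sampling estimator.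
If `a⁻¹ ≤ w_i ≤ a`, `1 ≤ M_T < M`, `T` is the `M_T`-th largest weight,
`w̄_i = min(w_i, T)` and `|f_i| ≤ F`, then
`|Σ f_i w̄_i / Σ w̄_j − Σ f_i w_i / Σ w_j| ≤ 2a²F·M_T/M`, and consequently if
`M_T ≤ √M` this difference is at most `2a²F/√M`. -/
theorem clipped_self_normalized_bound (M MT : ℕ) (hMT1 : 1 ≤ MT) (hMT2 : MT < M)
    (a F : ℝ) (ha : 0 < a)
    (w f : Fin M → ℝ)
    (hw : ∀ i, a⁻¹ ≤ w i ∧ w i ≤ a)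
    (hf : ∀ i, |f i| ≤ F)
    (σ : Equiv.Perm (Fin M))
    (hσ : ∀ k l : Fin M, k ≤ l → w (σ l) ≤ w (σ k))
    (T : ℝ) (hT : T = w (σ ⟨MT - 1, by omega⟩)) :
    |(∑ i, f i * min (w i) T) / (∑ j, min (w j) T) -
        (∑ i, f i * w i) / (∑ j, w j)| ≤ 2 * a ^ 2 * F * MT / M ∧
    ((MT : ℝ) ≤ Real.sqrt M →
      |(∑ i, f i * min (w i) T) / (∑ j, min (w j) T) -
          (∑ i, f i * w i) / (∑ j, w j)| ≤ 2 * a ^ 2 * F / Real.sqrt M) := by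
  have hM : 1 ≤ M := by omega
  have ha' : 0 < a⁻¹ := inv_pos.mpr ha
  have hMpos : (0:ℝ) < M := by exact_mod_cast (by omega : 0 < M)
  have hT1 : a⁻¹ ≤ T := by rw [hT]; exact (hw _).1
  have hT2 : T ≤ a := by rw [hT]; exact (hw _).2
  have hwb1 : ∀ i, a⁻¹ ≤ min (w i) T := fun i => le_min (hw i).1 hT1
  have hwb2 : ∀ i, min (w i) T ≤ w i := fun i => min_le_left _ _
  have hF : 0 ≤ F := le_trans (abs_nonneg _) (hf ⟨0, by omega⟩)
  set wb : Fin M → ℝ := fun i => min (w i) T with hwbdef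
  set S := ∑ j, w j with hSdef
  set Sb := ∑ j, wb j with hSbdef
  have hSb_lb : (M:ℝ) * a⁻¹ ≤ Sb := by
    calc (M:ℝ) * a⁻¹ = ∑ _j : Fin M, a⁻¹ := by
          simp [Finset.sum_const, mul_comm]
      _ ≤ Sb := Finset.sum_le_sum fun i _ => hwb1 i
  have hSb_pos : 0 < Sb := lt_of_lt_of_le (by positivity) hSb_lb
  have hSbS : Sb ≤ S := Finset.sum_le_sum fun i _ => hwb2 i
  have hS_lb : (M:ℝ) * a⁻¹ ≤ S := le_trans hSb_lb hSbS
  have hS_pos : 0 < S := lt_of_lt_of_le hSb_pos hSbS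
  -- bound on D = S - Sb
  set D := S - Sb with hDdef
  have hD0 : 0 ≤ D := by simp [hDdef]; linarith
  set Bset := Finset.univ.filter (fun i : Fin M => T < w i) with hBset
  have hcard : Bset.card ≤ MT := by
    have : Bset.card ≤ (Finset.range MT).card := by
      apply Finset.card_le_card_of_injOn (fun i => ((σ.symm i : Fin M) : ℕ))
      · intro i hi
        simp only [hBset, Finset.mem_filter] at hi
        simp only [Finset.mem_range]
        by_contra hcon
        have hcon : MT ≤ ((σ.symm i : Fin M) : ℕ) := by
          simpa [not_lt, Finset.mem_coe, Finset.mem_range] using hcon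
        have hle : (⟨MT - 1, by omega⟩ : Fin M) ≤ σ.symm i := by
          simp [Fin.le_def]; omega
        have := hσ _ _ hle
        rw [Equiv.apply_symm_apply] at this
        rw [← hT] at this
        linarith [(by simpa [hBset] using hi : T < w i)]
      · intro i _ j _ hij
        have : σ.symm i = σ.symm j := Fin.val_injective hij
        exact σ.symm.injective this
    simpa using this
  have hDle : D ≤ (MT : ℝ) * a := by
    have hsum : D = ∑ i, (w i - wb i) := by
      simp [hDdef, hSdef, hSbdef, Finset.sum_sub_distrib]
    rw [hsum]
    have h1 : ∑ i, (w i - wb i) = ∑ i ∈ Bset, (w i - wb i) := by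
      rw [eq_comm]
      apply Finset.sum_subset (Finset.subset_univ _)
      intro i _ hi
      simp only [hBset, Finset.mem_filter, Finset.mem_univ, true_and, not_lt] at hi
      simp [hwbdef, min_eq_left hi]
    rw [h1]
    calc ∑ i ∈ Bset, (w i - wb i) ≤ ∑ _i ∈ Bset, a := by
          apply Finset.sum_le_sum
          intro i _
          have := (hw i).2
          have := hwb1 i
          linarith
      _ = Bset.card * a := by simp [mul_comm]
      _ ≤ (MT : ℝ) * a := by
          apply mul_le_mul_of_nonneg_right _ ha.le
          exact_mod_cast hcard
  -- numerator bounds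
  set A := ∑ i, f i * wb i with hAdef
  set B := ∑ i, f i * w i with hBdef
  have hAbound : |A| ≤ F * Sb := by
    calc |A| ≤ ∑ i, |f i * wb i| := Finset.abs_sum_le_sum_abs _ _
      _ ≤ ∑ i, F * wb i := by
          apply Finset.sum_le_sum
          intro i _
          rw [abs_mul, abs_of_nonneg (le_trans ha'.le (hwb1 i))]
          exact mul_le_mul_of_nonneg_right (hf i) (le_trans ha'.le (hwb1 i))
      _ = F * Sb := by rw [hSbdef, Finset.mul_sum]
  have hABbound : |A - B| ≤ F * D := by
    have : A - B = ∑ i, f i * (wb i - w i) := by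
      simp [hAdef, hBdef, Finset.sum_sub_distrib, mul_sub]
    rw [this]
    calc |∑ i, f i * (wb i - w i)| ≤ ∑ i, |f i * (wb i - w i)| :=
          Finset.abs_sum_le_sum_abs _ _
      _ ≤ ∑ i, F * (w i - wb i) := by
          apply Finset.sum_le_sum
          intro i _
          rw [abs_mul]
          have h2 : |wb i - w i| = w i - wb i := by
            rw [abs_sub_comm]; exact abs_of_nonneg (by linarith [hwb2 i])
          rw [h2]
          exact mul_le_mul_of_nonneg_right (hf i) (by linarith [hwb2 i])
      _ = F * D := by
          rw [hDdef, hSdef, hSbdef, ← Finset.sum_sub_distrib, Finset.mul_sum]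
  -- key algebraic identity
  have hkey : A / Sb - B / S = A * D / (Sb * S) + (A - B) / S := by
    field_simp
    ring
  have hmain : |A / Sb - B / S| ≤ 2 * F * (D / S) := by
    rw [hkey]
    calc |A * D / (Sb * S) + (A - B) / S|
        ≤ |A * D / (Sb * S)| + |(A - B) / S| := abs_add_le _ _
      _ ≤ F * Sb * D / (Sb * S) + F * D / S := by
          gcongr
          · rw [abs_div, abs_mul, abs_of_nonneg hD0,
              abs_of_pos (mul_pos hSb_pos hS_pos)]
            gcongr
          · rw [abs_div, abs_of_pos hS_pos]
            gcongr
      _ = 2 * F * (D / S) := by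
          field_simp
          ring
  have hDS : D / S ≤ a ^ 2 * MT / M := by
    have h1 : D / S ≤ ((MT : ℝ) * a) / ((M : ℝ) * a⁻¹) :=
      div_le_div₀ (by positivity) hDle (by positivity) hS_lb
    have h2 : ((MT : ℝ) * a) / ((M : ℝ) * a⁻¹) = a ^ 2 * MT / M := by
      field_simp
    linarith [h1, h2.le, h2.ge]
  have hfinal : |A / Sb - B / S| ≤ 2 * a ^ 2 * F * MT / M := by
    calc |A / Sb - B / S| ≤ 2 * F * (D / S) := hmain
      _ ≤ 2 * F * (a ^ 2 * MT / M) := by gcongr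
      _ = 2 * a ^ 2 * F * MT / M := by ring
  refine ⟨hfinal, fun hsq => ?_⟩
  have hsqrt_pos : 0 < Real.sqrt M := Real.sqrt_pos.mpr hMpos
  have hMT_M : (MT : ℝ) / M ≤ 1 / Real.sqrt M := by
    rw [div_le_div_iff₀ hMpos hsqrt_pos]
    calc (MT : ℝ) * Real.sqrt M ≤ Real.sqrt M * Real.sqrt M :=
          mul_le_mul_of_nonneg_right hsq hsqrt_pos.le
      _ = M := Real.mul_self_sqrt hMpos.le
      _ = 1 * M := (one_mul _).symm
  calc |A / Sb - B / S| ≤ 2 * a ^ 2 * F * MT / M := hfinal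
    _ = (2 * a ^ 2 * F) * ((MT : ℝ) / M) := by ring
    _ ≤ (2 * a ^ 2 * F) * (1 / Real.sqrt M) := by
        apply mul_le_mul_of_nonneg_left hMT_M (by positivity)
    _ = 2 * a ^ 2 * F / Real.sqrt M := by ring
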